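/- Converse Pythagorean property: With notation as above and assuming D(P, ζ₀) < ∞ for all P ∈ Γ, if D(P, ζ*) + D(P*, ζ₀) ≤ D(P, ζ₀) holds for all P ∈ Γ (where P* ∈ Γ and ζ* is an act), then (P*, ζ*) is a saddle-point of the relative game (Γ, Z, L₀): ζ* is Bayes against P* and L₀(P,ζ*) ≤ L₀(P*,ζ*) for all P ∈ Γ. -/
import Mathlib


/-- Converse Pythagorean property: the Pythagorean inequality on Γ implies that
(P*, ζ*) is a saddle-point of the relative game. -/
theorem stmt_10 {X Z : Type*} [Fintype X] (ℓ : X → Z → ℝ)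
    (Γ : Set (X → ℝ)) (hΓ : ∀ P ∈ Γ, (∀ x, 0 ≤ P x) ∧ ∑ x, P x = 1)
    (H : (X → ℝ) → ℝ) (ζ₀ : Z) (ζstar : Z) (Pstar : X → ℝ)
    (hPstar : Pstar ∈ Γ)
    (hH : ∀ P ∈ Γ, IsGLB (Set.range fun ζ : Z => ∑ x, P x * ℓ x ζ) (H P))
    (hpyth : ∀ P ∈ Γ,
      ((∑ x, P x * ℓ x ζstar) - H P) + ((∑ x, Pstar x * ℓ x ζ₀) - H Pstar)
        ≤ (∑ x, P x * ℓ x ζ₀) - H P) :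
    (∑ x, Pstar x * ℓ x ζstar) = H Pstar ∧
    ∀ P ∈ Γ,
      (∑ x, P x * ℓ x ζstar) - (∑ x, P x * ℓ x ζ₀)
        ≤ (∑ x, Pstar x * ℓ x ζstar) - (∑ x, Pstar x * ℓ x ζ₀) := by
  have hlb := (hH Pstar hPstar).1 (Set.mem_range_self ζstar)
  have hub := hpyth Pstar hPstar
  have heq : (∑ x, Pstar x * ℓ x ζstar) = H Pstar := le_antisymm (by linarith) hlb
  refine ⟨heq, fun P hP => ?_⟩
  have h := hpyth P hP
  linarith
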